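/- Elliptic partial fraction decomposition: let [·]: ℂ → ℂ be a nonzero entire odd function satisfying the Riemann relation, and let z, x₁, …, x_N, y₁, …, y_N be complex numbers such that the x_i are pairwise distinct modulo the zero set of [·] and z - x_i is not a zero of [·] for all i. Set c = Σ_{i=1}^N (x_i - y_i). Then [c] · ∏_{j=1}^N [z-y_j]/[z-x_j] = Σ_{i=1}^N ([z-x_i+c]/[z-x_i]) · (∏_{j=1}^N [x_i-y_j]) / (∏_{j≠i} [x_i-x_j]). -/

import Mathlib

open Finset


lemma star_lemma (f : ℂ → ℂ)
    (hR : ∀ x y u v : ℂ,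
      f (x + u) * f (x - u) * (f (y + v) * f (y - v)) -
        f (x + v) * f (x - v) * (f (y + u) * f (y - u)) =
      f (x + y) * f (x - y) * (f (u + v) * f (u - v)))
    (a x₁ x₂ y₁ y₂ c : ℂ) (hc : c = x₁ + x₂ - y₁ - y₂) :
    f c * f (x₁ - x₂) * (f (a - y₁) * f (a - y₂)) =
      f (a - x₁ + c) * f (a - x₂) * (f (x₁ - y₁) * f (x₁ - y₂)) -
        f (a - x₂ + c) * f (a - x₁) * (f (x₂ - y₁) * f (x₂ - y₂)) := by
  have h := hR (a - (y₁ + y₂) / 2) (x₁ - (y₁ + y₂) / 2) (x₂ - (y₁ + y₂) / 2) ((y₂ - y₁) / 2)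
  rw [show a - (y₁ + y₂) / 2 + (x₂ - (y₁ + y₂) / 2) = a - x₁ + c by rw [hc]; ring] at h
  rw [show a - (y₁ + y₂) / 2 - (x₂ - (y₁ + y₂) / 2) = a - x₂ by ring] at h
  rw [show x₁ - (y₁ + y₂) / 2 + (y₂ - y₁) / 2 = x₁ - y₁ by ring] at h
  rw [show x₁ - (y₁ + y₂) / 2 - (y₂ - y₁) / 2 = x₁ - y₂ by ring] at h
  rw [show a - (y₁ + y₂) / 2 + (y₂ - y₁) / 2 = a - y₁ by ring] at h
  rw [show a - (y₁ + y₂) / 2 - (y₂ - y₁) / 2 = a - y₂ by ring] at h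
  rw [show x₁ - (y₁ + y₂) / 2 + (x₂ - (y₁ + y₂) / 2) = c by rw [hc]; ring] at h
  rw [show x₁ - (y₁ + y₂) / 2 - (x₂ - (y₁ + y₂) / 2) = x₁ - x₂ by ring] at h
  rw [show a - (y₁ + y₂) / 2 + (x₁ - (y₁ + y₂) / 2) = a - x₂ + c by rw [hc]; ring] at h
  rw [show a - (y₁ + y₂) / 2 - (x₁ - (y₁ + y₂) / 2) = a - x₁ by ring] at h
  rw [show x₂ - (y₁ + y₂) / 2 + (y₂ - y₁) / 2 = x₂ - y₁ by ring] at h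
  rw [show x₂ - (y₁ + y₂) / 2 - (y₂ - y₁) / 2 = x₂ - y₂ by ring] at h
  linear_combination -h

lemma symB_key (f : ℂ → ℂ)
    (hodd : ∀ u : ℂ, f (-u) = -f u)
    (hR : ∀ x y u v : ℂ,
      f (x + u) * f (x - u) * (f (y + v) * f (y - v)) -
        f (x + v) * f (x - v) * (f (y + u) * f (y - u)) =
      f (x + y) * f (x - y) * (f (u + v) * f (u - v)))
    (n : ℕ)
    (IH : ∀ (S : Finset ℕ) (X : ℕ → ℂ) (Y : Multiset ℂ), S.card = n → Y.card = n →
      (∀ i ∈ S, ∀ j ∈ S, i ≠ j → f (X i - X j) ≠ 0) →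
      (∑ i ∈ S, X i) = Y.sum →
      (∑ i ∈ S, (Y.map (fun v => f (X i - v))).prod / ∏ j ∈ S.erase i, f (X i - X j)) = 0)
    (S : Finset ℕ) (X : ℕ → ℂ) (hS : S.card = n + 1)
    (hdist : ∀ i ∈ S, ∀ j ∈ S, i ≠ j → f (X i - X j) ≠ 0)
    (a b : ℕ) (ha : a ∈ S) (hb : b ∈ S) (hab : a ≠ b)
    (p q : ℂ) (Y' : Multiset ℂ) (hY' : Y'.card + 1 = n)
    (hc0 : f (X a + X b - (p + q)) ≠ 0)
    (hsum : (∑ i ∈ S, X i) = p + q + Y'.sum) :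
    (∑ i ∈ S, ((p ::ₘ q ::ₘ Y').map (fun v => f (X i - v))).prod /
      ∏ j ∈ S.erase i, f (X i - X j)) = 0 := by
  have hb' : b ∈ S.erase a := Finset.mem_erase.mpr ⟨fun h => hab h.symm, hb⟩
  have ha' : a ∈ S.erase b := Finset.mem_erase.mpr ⟨hab, ha⟩
  have hba : f (X b - X a) ≠ 0 := hdist b hb a ha (fun h => hab h.symm)
  have hab' : f (X a - X b) ≠ 0 := hdist a ha b hb hab
  set W : ℕ → ℂ := fun i => (Y'.map (fun v => f (X i - v))).prod with hW
  set c₀ : ℂ := X a + X b - (p + q) with hc₀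
  set P : ℂ := f (X b - p) * f (X b - q) with hP
  set Q : ℂ := f (X a - p) * f (X a - q) with hQ
  set E : ℂ := f c₀ * f (X b - X a) with hE
  have hEne : E ≠ 0 := mul_ne_zero hc0 hba
  -- the two smaller configurations
  have hU : (∑ i ∈ S.erase a, f (X i - (p + q - X a)) * W i /
      ∏ j ∈ (S.erase a).erase i, f (X i - X j)) = 0 := by
    have := IH (S.erase a) X ((p + q - X a) ::ₘ Y')
      (by rw [Finset.card_erase_of_mem ha, hS]; rfl)
      (by rw [Multiset.card_cons, hY'])
      (fun i hi j hj hij => hdist i (Finset.mem_of_mem_erase hi) j (Finset.mem_of_mem_erase hj) hij)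
      (by
        rw [Multiset.sum_cons]
        have := Finset.add_sum_erase S X ha
        linear_combination hsum + this)
    simpa only [Multiset.map_cons, Multiset.prod_cons] using this
  have hV : (∑ i ∈ S.erase b, f (X i - (p + q - X b)) * W i /
      ∏ j ∈ (S.erase b).erase i, f (X i - X j)) = 0 := by
    have := IH (S.erase b) X ((p + q - X b) ::ₘ Y')
      (by rw [Finset.card_erase_of_mem hb, hS]; rfl)
      (by rw [Multiset.card_cons, hY'])
      (fun i hi j hj hij => hdist i (Finset.mem_of_mem_erase hi) j (Finset.mem_of_mem_erase hj) hij)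
      (by
        rw [Multiset.sum_cons]
        have := Finset.add_sum_erase S X hb
        linear_combination hsum + this)
    simpa only [Multiset.map_cons, Multiset.prod_cons] using this
  -- membership facts
  clear hY'
  -- reduce the goal's multiset products
  simp only [Multiset.map_cons, Multiset.prod_cons]
  rw [← Finset.add_sum_erase _ _ ha, ← Finset.add_sum_erase _ _ hb']
  -- per-point identities
  have key3 : ∀ i ∈ (S.erase a).erase b,
      f (X i - p) * (f (X i - q) * W i) / ∏ j ∈ S.erase i, f (X i - X j) =
      (P * (f (X i - (p + q - X a)) * W i / ∏ j ∈ (S.erase a).erase i, f (X i - X j)) -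
       Q * (f (X i - (p + q - X b)) * W i / ∏ j ∈ (S.erase b).erase i, f (X i - X j))) / E := by
    intro i hi
    have hib : i ≠ b := (Finset.mem_erase.mp hi).1
    have hia : i ≠ a := (Finset.mem_erase.mp (Finset.mem_of_mem_erase hi)).1
    have hiS : i ∈ S := Finset.mem_of_mem_erase (Finset.mem_of_mem_erase hi)
    have hfia : f (X i - X a) ≠ 0 := hdist i hiS a ha hia
    have hfib : f (X i - X b) ≠ 0 := hdist i hiS b hb hib
    have haSi : a ∈ S.erase i := Finset.mem_erase.mpr ⟨fun h => hia h.symm, ha⟩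
    have hbSia : b ∈ (S.erase i).erase a :=
      Finset.mem_erase.mpr ⟨fun h => hab h.symm, Finset.mem_erase.mpr ⟨fun h => hib h.symm, hb⟩⟩
    have hDi : ∏ j ∈ S.erase i, f (X i - X j) =
        f (X i - X a) * (f (X i - X b) * ∏ j ∈ ((S.erase i).erase a).erase b, f (X i - X j)) := by
      rw [Finset.mul_prod_erase _ (fun j => f (X i - X j)) hbSia, Finset.mul_prod_erase _ (fun j => f (X i - X j)) haSi]
    have hDU : ∏ j ∈ (S.erase a).erase i, f (X i - X j) =
        f (X i - X b) * ∏ j ∈ ((S.erase i).erase a).erase b, f (X i - X j) := by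
      rw [Finset.erase_right_comm, Finset.mul_prod_erase _ (fun j => f (X i - X j)) hbSia]
    have haSib : a ∈ (S.erase i).erase b :=
      Finset.mem_erase.mpr ⟨hab, Finset.mem_erase.mpr ⟨fun h => hia h.symm, ha⟩⟩
    have hDV : ∏ j ∈ (S.erase b).erase i, f (X i - X j) =
        f (X i - X a) * ∏ j ∈ ((S.erase i).erase a).erase b, f (X i - X j) := by
      have e1 : (S.erase b).erase i = (S.erase i).erase b := Finset.erase_right_comm
      have e2 : ((S.erase i).erase a).erase b = ((S.erase i).erase b).erase a :=
        Finset.erase_right_comm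
      rw [e1, e2, Finset.mul_prod_erase _ (fun j => f (X i - X j)) haSib]
    have hRne : (∏ j ∈ ((S.erase i).erase a).erase b, f (X i - X j)) ≠ 0 := by
      refine Finset.prod_ne_zero_iff.mpr fun j hj => ?_
      have hjS : j ∈ S := Finset.mem_of_mem_erase (Finset.mem_of_mem_erase (Finset.mem_of_mem_erase hj))
      have hji : j ≠ i := (Finset.mem_erase.mp (Finset.mem_of_mem_erase (Finset.mem_of_mem_erase hj))).1
      exact hdist i hiS j hjS (fun h => hji h.symm)
    have hstar := star_lemma f hR (X i) (X b) (X a) p q c₀ (by rw [hc₀]; ring)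
    rw [show X i - X b + c₀ = X i - (p + q - X a) by rw [hc₀]; ring,
      show X i - X a + c₀ = X i - (p + q - X b) by rw [hc₀]; ring] at hstar
    rw [hDi, hDU, hDV, hE, hP, hQ]
    field_simp
    linear_combination W i * hstar
  have key1 : f (X a - p) * (f (X a - q) * W a) / ∏ j ∈ S.erase a, f (X a - X j) =
      (0 - Q * (f (X a - (p + q - X b)) * W a / ∏ j ∈ (S.erase a).erase b, f (X a - X j))) / E := by
    have hDa : ∏ j ∈ S.erase a, f (X a - X j) =
        f (X a - X b) * ∏ j ∈ (S.erase a).erase b, f (X a - X j) := by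
      rw [Finset.mul_prod_erase _ (fun j => f (X a - X j)) hb']
    have hRne : (∏ j ∈ (S.erase a).erase b, f (X a - X j)) ≠ 0 := by
      refine Finset.prod_ne_zero_iff.mpr fun j hj => ?_
      have hjS : j ∈ S := Finset.mem_of_mem_erase (Finset.mem_of_mem_erase hj)
      have hja : j ≠ a := (Finset.mem_erase.mp (Finset.mem_of_mem_erase hj)).1
      exact hdist a ha j hjS (fun h => hja h.symm)
    have hoddba : f (X b - X a) = -f (X a - X b) := by
      rw [show X b - X a = -(X a - X b) by ring, hodd]
    rw [show X a - (p + q - X b) = c₀ by rw [hc₀]; ring]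
    rw [hDa, hE, hQ, hoddba]
    field_simp
    ring
  have key2 : f (X b - p) * (f (X b - q) * W b) / ∏ j ∈ S.erase b, f (X b - X j) =
      (P * (f (X b - (p + q - X a)) * W b / ∏ j ∈ (S.erase a).erase b, f (X b - X j)) - 0) / E := by
    have hDb : ∏ j ∈ S.erase b, f (X b - X j) =
        f (X b - X a) * ∏ j ∈ (S.erase b).erase a, f (X b - X j) := by
      rw [Finset.mul_prod_erase _ (fun j => f (X b - X j)) ha']
    have hDUb : ∏ j ∈ (S.erase a).erase b, f (X b - X j) = ∏ j ∈ (S.erase b).erase a, f (X b - X j) := by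
      rw [Finset.erase_right_comm]
    have hRne : (∏ j ∈ (S.erase b).erase a, f (X b - X j)) ≠ 0 := by
      refine Finset.prod_ne_zero_iff.mpr fun j hj => ?_
      have hjS : j ∈ S := Finset.mem_of_mem_erase (Finset.mem_of_mem_erase hj)
      have hjb : j ≠ b := (Finset.mem_erase.mp (Finset.mem_of_mem_erase hj)).1
      exact hdist b hb j hjS (fun h => hjb h.symm)
    rw [show X b - (p + q - X a) = c₀ by rw [hc₀]; ring]
    rw [hDb, hDUb, hE, hP]
    field_simp
    ring
  -- split the two auxiliary sums
  rw [← Finset.add_sum_erase _ _ hb'] at hU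
  rw [← Finset.add_sum_erase _ _ ha', Finset.erase_right_comm] at hV
  rw [Finset.sum_congr rfl key3, key1, key2]
  rw [show ∑ i ∈ (S.erase a).erase b,
      (P * (f (X i - (p + q - X a)) * W i / ∏ j ∈ (S.erase a).erase i, f (X i - X j)) -
       Q * (f (X i - (p + q - X b)) * W i / ∏ j ∈ (S.erase b).erase i, f (X i - X j))) / E =
      (P * ∑ i ∈ (S.erase a).erase b, f (X i - (p + q - X a)) * W i / ∏ j ∈ (S.erase a).erase i, f (X i - X j) -
       Q * ∑ i ∈ (S.erase a).erase b, f (X i - (p + q - X b)) * W i / ∏ j ∈ (S.erase b).erase i, f (X i - X j)) / E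
    by rw [← Finset.sum_div, Finset.sum_sub_distrib, Finset.mul_sum, Finset.mul_sum]]
  linear_combination (P / E) * hU - (Q / E) * hV

lemma dense_good (f : ℂ → ℂ) (hne : f ≠ 0) (hent : Differentiable ℂ f) (k : ℂ) :
    Dense {t : ℂ | f (k - t) ≠ 0} := by
  rw [dense_iff_inter_open]
  rintro U hU ⟨u, hu⟩
  by_contra hcon
  push_neg at hcon
  have hzero : ∀ t ∈ U, f (k - t) = 0 := by
    intro t ht
    by_contra h
    exact (Set.eq_empty_iff_forall_notMem.mp hcon t) ⟨ht, h⟩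
  have hU' : IsOpen ((fun t : ℂ => k - t) '' U) := by
    have : (fun t : ℂ => k - t) '' U = (fun t : ℂ => k - t) ⁻¹' U := by
      ext w
      constructor
      · rintro ⟨t, ht, rfl⟩; simpa using ht
      · intro hw; exact ⟨k - w, hw, by ring⟩
    rw [this]
    exact hU.preimage (by continuity)
  have hmem : k - u ∈ (fun t : ℂ => k - t) '' U := ⟨u, hu, rfl⟩
  have hev : f =ᶠ[nhds (k - u)] 0 := by
    filter_upwards [hU'.mem_nhds hmem] with w hw
    obtain ⟨t, ht, rfl⟩ := hw
    exact hzero t ht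
  have hanalytic : AnalyticOnNhd ℂ f Set.univ := fun z _ => hent.analyticAt z
  have := hanalytic.eqOn_zero_of_preconnected_of_eventuallyEq_zero
    isPreconnected_univ (Set.mem_univ (k - u)) hev
  exact hne (funext fun w => this (Set.mem_univ w))

lemma symB (f : ℂ → ℂ) (hne : f ≠ 0) (hent : Differentiable ℂ f)
    (hodd : ∀ u : ℂ, f (-u) = -f u)
    (hR : ∀ x y u v : ℂ,
      f (x + u) * f (x - u) * (f (y + v) * f (y - v)) -
        f (x + v) * f (x - v) * (f (y + u) * f (y - u)) =
      f (x + y) * f (x - y) * (f (u + v) * f (u - v))) :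
    ∀ (n : ℕ) (S : Finset ℕ) (X : ℕ → ℂ) (Y : Multiset ℂ), S.card = n → Multiset.card Y = n →
      (∀ i ∈ S, ∀ j ∈ S, i ≠ j → f (X i - X j) ≠ 0) →
      (∑ i ∈ S, X i) = Y.sum →
      (∑ i ∈ S, (Y.map (fun v => f (X i - v))).prod / ∏ j ∈ S.erase i, f (X i - X j)) = 0 := by
  have f0 : f 0 = 0 := by
    have h := hodd 0
    rw [neg_zero] at h
    linear_combination h / 2
  intro n
  induction n with
  | zero =>
    intro S X Y hS _ _ _
    rw [Finset.card_eq_zero] at hS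
    subst hS
    simp
  | succ n IH =>
    intro S X Y hS hY hdist hsum
    rcases n with _ | _ | m
    · -- card 1
      obtain ⟨a, rfl⟩ := Finset.card_eq_one.mp hS
      obtain ⟨v, rfl⟩ := Multiset.card_eq_one.mp hY
      simp only [Finset.sum_singleton, Multiset.sum_singleton] at hsum
      simp only [Finset.sum_singleton, Finset.erase_singleton, Finset.prod_empty,
        Multiset.map_singleton, Multiset.prod_singleton, div_one]
      rw [← hsum, sub_self, f0]
    · -- card 2
      obtain ⟨a, b, hab, rfl⟩ := Finset.card_eq_two.mp hS
      obtain ⟨p, q, rfl⟩ := Multiset.card_eq_two.mp hY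
      have hsum' : X a + X b = p + q := by
        rw [Finset.sum_pair hab] at hsum
        simpa using hsum
      have e1 : ({a, b} : Finset ℕ).erase a = {b} := by
        rw [show ({a, b} : Finset ℕ) = insert a {b} from rfl,
          Finset.erase_insert (by simpa using hab)]
      have e2 : ({a, b} : Finset ℕ).erase b = {a} := by
        rw [Finset.pair_comm, show ({b, a} : Finset ℕ) = insert b {a} from rfl,
          Finset.erase_insert (by simpa using hab.symm)]
      have hfab : f (X a - X b) ≠ 0 := by
        apply hdist a (by simp) b (by simp) hab
      rw [Finset.sum_pair hab, e1, e2]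
      simp only [Multiset.insert_eq_cons, Multiset.map_cons, Multiset.prod_cons,
        Multiset.map_singleton, Multiset.prod_singleton, Finset.prod_singleton]
      have o1 : f (X a - p) = -f (X b - q) := by
        rw [show X a - p = -(X b - q) by linear_combination hsum', hodd]
      have o2 : f (X a - q) = -f (X b - p) := by
        rw [show X a - q = -(X b - p) by linear_combination hsum', hodd]
      have o3 : f (X b - X a) = -f (X a - X b) := by
        rw [show X b - X a = -(X a - X b) by ring, hodd]
      rw [o1, o2, o3]
      rw [div_neg]
      field_simp
      ring
    · -- card ≥ 3
      obtain ⟨a, ha⟩ := Finset.card_pos.mp (by omega : 0 < S.card)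
      obtain ⟨b, hb'⟩ : (S.erase a).Nonempty :=
        Finset.card_pos.mp (by rw [Finset.card_erase_of_mem ha]; omega)
      have hb : b ∈ S := Finset.mem_of_mem_erase hb'
      have hab : a ≠ b := fun h => (Finset.mem_erase.mp hb').1 h.symm
      obtain ⟨p, Y1, rfl⟩ : ∃ p Y1, Y = p ::ₘ Y1 := by
        obtain ⟨p, hp⟩ := Multiset.exists_mem_of_ne_zero
          (show Y ≠ 0 by intro h; rw [h, Multiset.card_zero] at hY; omega)
        obtain ⟨t, ht⟩ := Multiset.exists_cons_of_mem hp
        exact ⟨p, t, ht⟩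
      rw [Multiset.card_cons] at hY
      obtain ⟨q, Y2, rfl⟩ : ∃ q Y2, Y1 = q ::ₘ Y2 := by
        obtain ⟨q, hq⟩ := Multiset.exists_mem_of_ne_zero
          (show Y1 ≠ 0 by intro h; rw [h, Multiset.card_zero] at hY; omega)
        obtain ⟨t, ht⟩ := Multiset.exists_cons_of_mem hq
        exact ⟨q, t, ht⟩
      rw [Multiset.card_cons] at hY
      obtain ⟨r, Y3, rfl⟩ : ∃ r Y3, Y2 = r ::ₘ Y3 := by
        obtain ⟨r, hr⟩ := Multiset.exists_mem_of_ne_zero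
          (show Y2 ≠ 0 by intro h; rw [h, Multiset.card_zero] at hY; omega)
        obtain ⟨t, ht⟩ := Multiset.exists_cons_of_mem hr
        exact ⟨r, t, ht⟩
      rw [Multiset.card_cons] at hY
      have hY3 : Multiset.card Y3 = m := by omega
      rw [Multiset.sum_cons, Multiset.sum_cons, Multiset.sum_cons] at hsum
      have key := fun (p' q' : ℂ) (Y' : Multiset ℂ) hY' hc0 hsum' =>
        symB_key f hodd hR (m + 2) IH S X hS hdist a b ha hb hab p' q' Y' hY' hc0 hsum'
      by_cases hgood : f (X a + X b - (p + q)) ≠ 0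
      · exact key p q (r ::ₘ Y3) (by rw [Multiset.card_cons, hY3]) hgood
          (by rw [Multiset.sum_cons]; linear_combination hsum)
      · push_neg at hgood
        have hgt : ∀ t ∈ {t : ℂ | f ((X a + X b - (p + q)) - t) ≠ 0},
            (fun t : ℂ => ∑ i ∈ S, f (X i - (p + t)) *
              (f (X i - q) * (f (X i - (r - t)) * (Y3.map (fun v => f (X i - v))).prod)) /
              ∏ j ∈ S.erase i, f (X i - X j)) t = (fun _ : ℂ => (0 : ℂ)) t := by
          intro t ht
          have := key (p + t) q ((r - t) ::ₘ Y3) (by rw [Multiset.card_cons, hY3])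
            (by rw [show X a + X b - (p + t + q) = X a + X b - (p + q) - t by ring]; exact ht)
            (by rw [Multiset.sum_cons]; linear_combination hsum)
          simpa only [Multiset.map_cons, Multiset.prod_cons] using this
        have hfc : Continuous f := hent.continuous
        have hcont : Continuous (fun t : ℂ => ∑ i ∈ S, f (X i - (p + t)) *
            (f (X i - q) * (f (X i - (r - t)) * (Y3.map (fun v => f (X i - v))).prod)) /
            ∏ j ∈ S.erase i, f (X i - X j)) := by
          apply continuous_finset_sum
          intro i _
          apply Continuous.div_const
          fun_prop
        have hdense := dense_good f hne hent (X a + X b - (p + q))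
        have heq := Continuous.ext_on hdense hcont continuous_const hgt
        have h0 := congrFun heq 0
        simp only [add_zero, sub_zero] at h0
        simpa only [Multiset.map_cons, Multiset.prod_cons] using h0

/-- Elliptic partial fraction decomposition for a nonzero entire odd function
satisfying the Riemann relation. -/


theorem elliptic_partial_fraction (f : ℂ → ℂ)
    (hne : f ≠ 0) (hent : Differentiable ℂ f)
    (hodd : ∀ u : ℂ, f (-u) = -f u)
    (hR : ∀ x y u v : ℂ,
      f (x + u) * f (x - u) * (f (y + v) * f (y - v)) -
        f (x + v) * f (x - v) * (f (y + u) * f (y - u)) =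
      f (x + y) * f (x - y) * (f (u + v) * f (u - v)))
    (N : ℕ) (z : ℂ) (x y : Fin N → ℂ)
    (hx : ∀ i j : Fin N, i ≠ j → f (x i - x j) ≠ 0)
    (hz : ∀ i : Fin N, f (z - x i) ≠ 0)
    (c : ℂ) (hc : c = ∑ i, (x i - y i)) :
    f c * ∏ j, f (z - y j) / f (z - x j) =
      ∑ i, f (z - x i + c) / f (z - x i) *
        ((∏ j, f (x i - y j)) / ∏ j ∈ univ.erase i, f (x i - x j)) := by
  classical
  set X : ℕ → ℂ := fun k => if h : k < N then x ⟨k, h⟩ else z with hX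
  set Xy : ℕ → ℂ := fun k => if h : k < N then y ⟨k, h⟩ else 0 with hXy
  have hXv : ∀ j : Fin N, X j.val = x j := fun j => by
    simp only [hX, dif_pos j.isLt]
  have hXyv : ∀ j : Fin N, Xy j.val = y j := fun j => by
    simp only [hXy, dif_pos j.isLt]
  have hXN : X N = z := by simp only [hX, dif_neg (lt_irrefl N)]
  set Ym : Multiset ℂ := (z + c) ::ₘ (Finset.range N).val.map Xy with hYm
  -- apply the symmetric identity
  have hsym := symB f hne hent hodd hR (N + 1) (Finset.range (N + 1)) X Ym
    (Finset.card_range _)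
    (by rw [hYm, Multiset.card_cons, Multiset.card_map]; simp)
    (by
      intro i hi j hj hij
      rw [Finset.mem_range] at hi hj
      rcases lt_or_ge i N with hiN | hiN
      · rcases lt_or_ge j N with hjN | hjN
        · simp only [hX, dif_pos hiN, dif_pos hjN]
          exact hx ⟨i, hiN⟩ ⟨j, hjN⟩ (by simpa [Fin.mk.injEq] using hij)
        · have hjz : X j = z := by simp only [hX, dif_neg (by omega : ¬ j < N)]
          rw [hjz]
          simp only [hX, dif_pos hiN]
          rw [show x ⟨i, hiN⟩ - z = -(z - x ⟨i, hiN⟩) by ring, hodd]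
          exact neg_ne_zero.mpr (hz _)
      · have hiz : X i = z := by simp only [hX, dif_neg (by omega : ¬ i < N)]
        have hjN : j < N := by omega
        rw [hiz]
        simp only [hX, dif_pos hjN]
        exact hz _
      )
    (by
      have h1 : ∑ k ∈ Finset.range N, X k = ∑ i : Fin N, x i := by
        rw [← Fin.sum_univ_eq_sum_range X N]
        exact Finset.sum_congr rfl fun j _ => hXv j
      have h2 : ((Finset.range N).val.map Xy).sum = ∑ i : Fin N, y i := by
        rw [show ((Finset.range N).val.map Xy).sum = ∑ k ∈ Finset.range N, Xy k from rfl,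
          ← Fin.sum_univ_eq_sum_range Xy N]
        exact Finset.sum_congr rfl fun j _ => hXyv j
      rw [Finset.sum_range_succ, hXN, hYm, Multiset.sum_cons, h1, h2]
      rw [Finset.sum_sub_distrib] at hc
      linear_combination -hc)
  rw [Finset.sum_range_succ] at hsym
  rw [← Fin.sum_univ_eq_sum_range (fun k => (Ym.map fun v => f (X k - v)).prod /
      ∏ j ∈ (Finset.range (N + 1)).erase k, f (X k - X j)) N] at hsym
  -- last term
  have hprodz : ∀ w : ℂ, ((Finset.range N).val.map (fun k => f (w - Xy k))).prod =
      ∏ j : Fin N, f (w - y j) := by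
    intro w
    rw [show ((Finset.range N).val.map (fun k => f (w - Xy k))).prod =
        ∏ k ∈ Finset.range N, f (w - Xy k) from rfl,
      ← Fin.prod_univ_eq_prod_range (fun k => f (w - Xy k)) N]
    exact Finset.prod_congr rfl fun j _ => by rw [hXyv j]
  have hlast : (Ym.map fun v => f (X N - v)).prod /
      ∏ j ∈ (Finset.range (N + 1)).erase N, f (X N - X j) =
      -(f c * ∏ j, f (z - y j) / f (z - x j)) := by
    rw [hXN, hYm, Multiset.map_cons, Multiset.prod_cons, Multiset.map_map]
    rw [show ((fun v => f (z - v)) ∘ Xy) = fun k => f (z - Xy k) from rfl, hprodz]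
    rw [Finset.range_add_one, Finset.erase_insert Finset.notMem_range_self]
    have hden : ∏ j ∈ Finset.range N, f (z - X j) = ∏ j : Fin N, f (z - x j) := by
      rw [← Fin.prod_univ_eq_prod_range (fun k => f (z - X k)) N]
      exact Finset.prod_congr rfl fun j _ => by rw [hXv j]
    rw [hden, show z - (z + c) = -c by ring, hodd, Finset.prod_div_distrib]
    have hdne : ∏ j : Fin N, f (z - x j) ≠ 0 := Finset.prod_ne_zero_iff.mpr fun j _ => hz j
    field_simp
  have hterm : ∀ i : Fin N,
      (Ym.map fun v => f (X i.val - v)).prod /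
        ∏ j ∈ (Finset.range (N + 1)).erase i.val, f (X i.val - X j) =
      f (z - x i + c) / f (z - x i) *
        ((∏ j, f (x i - y j)) / ∏ j ∈ univ.erase i, f (x i - x j)) := by
    intro i
    rw [hYm, Multiset.map_cons, Multiset.prod_cons, Multiset.map_map]
    rw [show ((fun v => f (X i.val - v)) ∘ Xy) = fun k => f (X i.val - Xy k) from rfl]
    rw [hXv i, hprodz (x i)]
    have hset : (Finset.range (N + 1)).erase i.val =
        insert N ((Finset.range N).erase i.val) := by
      rw [Finset.range_add_one, Finset.erase_insert_of_ne (Nat.ne_of_lt i.isLt).symm]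
    rw [hset, Finset.prod_insert (fun h => Finset.notMem_range_self
      (Finset.mem_of_mem_erase h))]
    have hset2 : (Finset.range N).erase i.val = (univ.erase i).map Fin.valEmbedding := by
      rw [Finset.map_erase, Fin.map_valEmbedding_univ, ← Nat.Iio_eq_range]
      rfl
    have hden2 : ∏ j ∈ (Finset.range N).erase i.val, f (x i - X j) =
        ∏ j ∈ univ.erase i, f (x i - x j) := by
      rw [hset2, Finset.prod_map]
      exact Finset.prod_congr rfl fun j _ => by
        rw [show Fin.valEmbedding j = j.val from rfl, hXv j]
    rw [hden2, hXN]
    rw [show x i - (z + c) = -(z - x i + c) by ring, hodd,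
      show x i - z = -(z - x i) by ring, hodd]
    have hdne : ∏ j ∈ univ.erase i, f (x i - x j) ≠ 0 :=
      Finset.prod_ne_zero_iff.mpr fun j hj => hx i j fun h =>
        (Finset.mem_erase.mp hj).1 h.symm
    field_simp
  rw [Finset.sum_congr rfl (fun i _ => hterm i), hlast] at hsym
  linear_combination -hsym
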